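/- Every extended caterpillar digraph is noneven: there exists an assignment of weights 0,1 to its arcs so that every directed cycle has odd total weight. -/

import Mathlib

open Matrix

/-- `c` traces a directed cycle of length `m+1` in the digraph `R`:
distinct vertices, consecutive arcs (indices wrap around in `Fin (m+1)`). -/
def DicycleOn {V : Type*} {m : ℕ} (R : V → V → Prop) (c : Fin (m+1) → V) : Prop :=
  Function.Injective c ∧ ∀ i, R (c i) (c (i+1))

/-- A digraph is noneven if some 0,1-weighting (valued in `ZMod 2`) of its arcs makes
every directed cycle have odd total weight. -/
def IsNoneven {V : Type*} (R : V → V → Prop) : Prop :=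
  ∃ w : V → V → ZMod 2, ∀ (m : ℕ) (c : Fin (m+1) → V),
    DicycleOn R c → ∑ i, w (c i) (c (i+1)) = 1

/-- A digraph is even if every 0,1-weighting of its arcs admits a directed cycle
of even total weight. -/
def IsEvenDigraph {V : Type*} (R : V → V → Prop) : Prop :=
  ∀ w : V → V → ZMod 2, ∃ (m : ℕ) (c : Fin (m+1) → V),
    DicycleOn R c ∧ ∑ i, w (c i) (c (i+1)) = 0

def StronglyConnected {V : Type*} (R : V → V → Prop) : Prop :=
  ∀ u v, Relation.ReflTransGen R u v

/-- Removing any single vertex leaves a strongly connected digraph. -/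
def StronglyTwoConnected {V : Type*} (R : V → V → Prop) : Prop :=
  ∀ x : V, StronglyConnected (fun a b : {y : V // y ≠ x} => R a b)

def SemiComplete {V : Type*} (R : V → V → Prop) : Prop :=
  ∀ u v : V, u ≠ v → R u v ∨ R v u

/-- The digraph W₄: double arcs 0↔1 and 2↔3, single arcs 0→2, 2→1, 1→3, 3→0
(the unique 2-connected semi-complete noneven digraph on 4 vertices; every vertex
has indegree 2 and outdegree 2 and there are 8 arcs). -/
def W4 : Fin 4 → Fin 4 → Prop := fun u v =>
  (u = 0 ∧ v = 1) ∨ (u = 1 ∧ v = 0) ∨ (u = 2 ∧ v = 3) ∨ (u = 3 ∧ v = 2) ∨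
  (u = 0 ∧ v = 2) ∨ (u = 2 ∧ v = 1) ∨ (u = 1 ∧ v = 3) ∨ (u = 3 ∧ v = 0)

/-- The symmetric double 4-cycle C₄*. -/
def C4star : Fin 4 → Fin 4 → Prop := fun u v => v = u + 1 ∨ u = v + 1

def DigraphIso {V W : Type*} (R : V → V → Prop) (S : W → W → Prop) : Prop :=
  ∃ e : V ≃ W, ∀ u v, R u v ↔ S (e u) (e v)

/-- A sign pattern: entries in {-1, 0, 1}. -/
def IsSignPattern {I : Type*} (H : Matrix I I ℝ) : Prop :=
  ∀ i j, H i j = -1 ∨ H i j = 0 ∨ H i j = 1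

/-- `A ∈ Q(H)`: the matrix `A` has sign pattern `H`. -/
def HasSignPattern {I : Type*} (A H : Matrix I I ℝ) : Prop :=
  ∀ i j, Real.sign (A i j) = H i j

/-- `Q(H)` contains a symplectic pair `(A, D)` with `Aᵀ D = I`. -/
def AllowsSymplecticPairs {I : Type*} [Fintype I] [DecidableEq I] (H : Matrix I I ℝ) : Prop :=
  ∃ A D : Matrix I I ℝ, HasSignPattern A H ∧ HasSignPattern D H ∧ Aᵀ * D = 1

def IsSignNonsingular {I : Type*} [Fintype I] [DecidableEq I] (H : Matrix I I ℝ) : Prop :=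
  ∀ A : Matrix I I ℝ, HasSignPattern A H → A.det ≠ 0

def NegativeDiagonal {I : Type*} (H : Matrix I I ℝ) : Prop := ∀ i, H i i = -1

/-- The (unweighted) digraph of the pattern `H` is `R`: an arc `(i,j)`, `i ≠ j`,
exactly for the off-diagonal nonzero entries. -/
def PatternDigraph {I : Type*} (H : Matrix I I ℝ) (R : I → I → Prop) : Prop :=
  ∀ i j, i ≠ j → (H i j ≠ 0 ↔ R i j)

/-- An unweighted digraph allows symplectic pairs if some negative-diagonal sign
pattern whose digraph is `R` allows symplectic pairs. -/
def DigraphAllowsSymplecticPairs {V : Type*} [Fintype V] [DecidableEq V]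
    (R : V → V → Prop) : Prop :=
  ∃ H : Matrix V V ℝ, IsSignPattern H ∧ NegativeDiagonal H ∧
    PatternDigraph H R ∧ AllowsSymplecticPairs H

/-- Tree edges of the caterpillar tree underlying an extended caterpillar:
consecutive backbone vertices, and blossom vertices joined to their backbone vertex.
`pos` is the blossom (backbone) index of a vertex, `bb j` the backbone vertex of index `j`. -/
def CaterpillarTreeEdge {n : ℕ} (pos : Fin n → ℕ) (bb : ℕ → Fin n) (u v : Fin n) : Prop :=
  u ≠ v ∧ ((u = bb (pos u) ∧ v = bb (pos v) ∧ (pos v = pos u + 1 ∨ pos u = pos v + 1)) ∨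
           (pos u = pos v ∧ (u = bb (pos u) ∨ v = bb (pos v))))

/-- `R` is an extended caterpillar on `Fin n`, where the natural order of `Fin n`
is the backbone-induced total order: there are `k` blossoms (`pos` monotone, surjective
onto `{0, …, k-1}` with backbone vertices `bb j`); the first and last blossoms are
trivial (no blossom vertices at the ends of the backbone); and the arcs are: one arc
`u → v` for every pair `v < u`, together with both arcs of every tree edge. -/
def IsExtendedCaterpillar {n : ℕ} (R : Fin n → Fin n → Prop) : Prop :=
  ∃ (k : ℕ) (pos : Fin n → ℕ) (bb : ℕ → Fin n),
    0 < k ∧ Monotone pos ∧ (∀ v, pos v < k) ∧ (∀ j, j < k → pos (bb j) = j) ∧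
    (∀ v, pos v = 0 → v = bb 0) ∧ (∀ v, pos v = k - 1 → v = bb (k - 1)) ∧
    (∀ u v, R u v ↔ (v < u ∨ (u < v ∧ CaterpillarTreeEdge pos bb u v)))

/-- Digraphs obtainable from the symmetric double cycle `C_k*` by subdividing arcs
and splitting vertices (the weak k-double-cycles). -/
inductive WeakDoubleCycle : (k : ℕ) → (V : Type) → (V → V → Prop) → Prop where
  | base (m : ℕ) : WeakDoubleCycle (m+1) (Fin (m+1)) (fun u v => v = u + 1 ∨ u = v + 1)
  | subdivide {k : ℕ} {V : Type} {R : V → V → Prop} (a b : V) (hab : R a b)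
      (h : WeakDoubleCycle k V R) :
      WeakDoubleCycle k (Option V) (fun x y =>
        (x = some a ∧ y = none) ∨ (x = none ∧ y = some b) ∨
        (∃ u v, x = some u ∧ y = some v ∧ R u v ∧ ¬(u = a ∧ v = b)))
  | split {k : ℕ} {V : Type} {R : V → V → Prop} (a : V) (h : WeakDoubleCycle k V R) :
      WeakDoubleCycle k (Option V) (fun x y =>
        (x = some a ∧ y = none) ∨
        (∃ v, x = none ∧ y = some v ∧ R a v) ∨
        (∃ u v, x = some u ∧ y = some v ∧ R u v ∧ u ≠ a))

/-- C₄-cockades: start with the 4-cycle; repeatedly pick an edge `(u,v)`, add two new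
vertices `u', v'` and the edges `(u,u')`, `(u',v')`, `(v',v)`. -/
inductive IsC4Cockade : (V : Type) → SimpleGraph V → Prop where
  | base : IsC4Cockade (Fin 4) (SimpleGraph.fromRel (fun u v => v = u + 1))
  | attach {V : Type} {G : SimpleGraph V} (u v : V) (huv : G.Adj u v)
      (h : IsC4Cockade V G) :
      IsC4Cockade (V ⊕ Fin 2)
        (SimpleGraph.fromRel (fun x y =>
          (∃ a b, x = Sum.inl a ∧ y = Sum.inl b ∧ G.Adj a b) ∨
          (x = Sum.inl u ∧ y = Sum.inr 0) ∨ (x = Sum.inr 0 ∧ y = Sum.inr 1) ∨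
          (x = Sum.inr 1 ∧ y = Sum.inl v)))

/-- `G` is 2-connected: connected, and removing any single vertex leaves it connected. -/
def GraphTwoConnected {V : Type*} (G : SimpleGraph V) : Prop :=
  G.Connected ∧ ∀ v : V, (G.induce {u | u ≠ v}).Connected

open Fin.CommRing in
lemma cyclic_reach_aux {m : ℕ} (S : Finset (Fin (m+1))) (hS : ∀ i ∈ S, i + 1 ∈ S)
    (a : Fin (m+1)) (ha : a ∈ S) (x : Fin (m+1)) : x ∈ S := by
  have key : ∀ t : ℕ, a + (t : Fin (m+1)) ∈ S := by
    intro t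
    induction t with
    | zero => simpa using ha
    | succ t ih =>
      have h1 : ((t+1 : ℕ) : Fin (m+1)) = (t : Fin (m+1)) + 1 := by push_cast; ring
      rw [h1, ← add_assoc]
      exact hS _ ih
  have := key (x - a).val
  rwa [Fin.cast_val_eq_self, add_sub_cancel] at this

lemma exists_cross_aux {m : ℕ} (P : Fin (m+1) → ℕ) (j : ℕ) (a b : Fin (m+1))
    (haj : P a ≤ j) (hbj : j < P b) : ∃ i, P i ≤ j ∧ j < P (i+1) := by
  by_contra hcon
  push_neg at hcon
  classical
  have hb : b ∈ Finset.univ.filter (fun i => P i ≤ j) := by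
    refine cyclic_reach_aux _ (fun i hi => ?_) a (by simpa using haj) b
    simp only [Finset.mem_filter, Finset.mem_univ, true_and] at hi ⊢
    exact hcon i hi
  simp only [Finset.mem_filter, Finset.mem_univ, true_and] at hb
  omega

/-- every extended caterpillar is noneven. -/
theorem stmt5 {n : ℕ} (R : Fin n → Fin n → Prop) (h : IsExtendedCaterpillar R) :
    IsNoneven R := by
  classical
  obtain ⟨k, pos, bb, hk, hmono, hltk, hbbpos, h0, hlast, hR⟩ := h
  refine ⟨fun u v => (pos u : ZMod 2) + (pos v : ZMod 2) +
      (if u = bb (pos u) then 0 else 1) + (if pos u < pos v then 0 else 1), ?_⟩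
  intro m c hc
  obtain ⟨hinj, harc⟩ := hc
  have hup : ∀ u v, R u v → pos u < pos v →
      u = bb (pos u) ∧ v = bb (pos v) ∧ pos v = pos u + 1 := by
    intro u v huv hp
    rcases (hR u v).1 huv with hlt | ⟨_, _, hcase⟩
    · exact absurd (hmono hlt.le) (by omega)
    · rcases hcase with ⟨h1, h2, h3 | h3⟩ | ⟨hpp, _⟩
      · exact ⟨h1, h2, h3⟩
      · omega
      · omega
  -- the case m = 0 is impossible (no loops)
  rcases Nat.eq_zero_or_pos m with rfl | hm
  · exfalso
    have hloop := harc 0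
    have h01 : (0 + 1 : Fin 1) = 0 := by decide
    rw [h01] at hloop
    rcases (hR _ _).1 hloop with hlt | ⟨hlt, _⟩
    · exact lt_irrefl _ hlt
    · exact lt_irrefl _ hlt
  obtain ⟨m, rfl⟩ : ∃ m', m = m' + 1 := ⟨m - 1, by omega⟩
  have hone : (1 : Fin (m+1+1)) ≠ 0 := by
    intro h1
    have h2 := congrArg Fin.val h1
    rw [Fin.val_one, Fin.val_zero] at h2
    omega
  have hupP : ∀ i : Fin (m+1+1), pos (c i) < pos (c (i+1)) →
      c i = bb (pos (c i)) ∧ c (i+1) = bb (pos (c (i+1))) ∧ pos (c (i+1)) = pos (c i) + 1 :=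
    fun i hi => hup _ _ (harc i) hi
  obtain ⟨iq, -, hiq⟩ := Finset.exists_min_image Finset.univ (fun i => pos (c i))
    ⟨0, Finset.mem_univ 0⟩
  obtain ⟨ip, -, hip⟩ := Finset.exists_max_image Finset.univ (fun i => pos (c i))
    ⟨0, Finset.mem_univ 0⟩
  have hiq' : ∀ i, pos (c iq) ≤ pos (c i) := fun i => hiq i (Finset.mem_univ i)
  have hip' : ∀ i, pos (c i) ≤ pos (c ip) := fun i => hip i (Finset.mem_univ i)
  set q := pos (c iq) with hqdef
  set p := pos (c ip) with hpdef
  have hqp : q ≤ p := hiq' ip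
  have hcross : ∀ j, q ≤ j → j < p →
      ∃ i, pos (c i) = j ∧ pos (c (i+1)) = j + 1 := by
    intro j hqj hjp
    obtain ⟨i, hi1, hi2⟩ := exists_cross_aux (fun i => pos (c i)) j iq ip
      (by show pos (c iq) ≤ j; omega) (by show j < pos (c ip); omega)
    have hi1' : pos (c i) ≤ j := hi1
    have hi2' : j < pos (c (i+1)) := hi2
    obtain ⟨-, -, h3⟩ := hupP i (by omega)
    exact ⟨i, by omega, by omega⟩
  have cardU : (Finset.univ.filter
      (fun i : Fin (m+1+1) => pos (c i) < pos (c (i+1)))).card = p - q := by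
    rw [show p - q = (Finset.Ico q p).card by rw [Nat.card_Ico]]
    refine Finset.card_bij (fun i _ => pos (c i)) ?_ ?_ ?_
    · intro i hi
      simp only [Finset.mem_filter, Finset.mem_univ, true_and] at hi
      exact Finset.mem_Ico.2 ⟨hiq' i, lt_of_lt_of_le hi (hip' (i+1))⟩
    · intro i hi i' hi' hPP
      simp only [Finset.mem_filter, Finset.mem_univ, true_and] at hi hi'
      obtain ⟨hb, -, -⟩ := hupP i hi
      obtain ⟨hb', -, -⟩ := hupP i' hi'
      have hPP' : pos (c i) = pos (c i') := hPP
      apply hinj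
      rw [hb, hb', hPP']
    · intro j hj
      rw [Finset.mem_Ico] at hj
      obtain ⟨i, hi1, hi2⟩ := hcross j hj.1 hj.2
      exact ⟨i, (by simp only [Finset.mem_filter, Finset.mem_univ, true_and]; omega), hi1⟩
  have cardK : (Finset.univ.filter
      (fun i : Fin (m+1+1) => c i = bb (pos (c i)))).card = p + 1 - q := by
    rw [show p + 1 - q = (Finset.Icc q p).card by rw [Nat.card_Icc]]
    refine Finset.card_bij (fun i _ => pos (c i)) ?_ ?_ ?_
    · intro i _
      exact Finset.mem_Icc.2 ⟨hiq' i, hip' i⟩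
    · intro i hi i' hi' hPP
      simp only [Finset.mem_filter, Finset.mem_univ, true_and] at hi hi'
      have hPP' : pos (c i) = pos (c i') := hPP
      apply hinj
      rw [hi, hi', hPP']
    · intro j hj
      rw [Finset.mem_Icc] at hj
      rcases lt_or_eq_of_le hj.2 with hjp | hjp
      · obtain ⟨i, hi1, hi2⟩ := hcross j hj.1 hjp
        obtain ⟨hb, -, -⟩ := hupP i (by omega)
        exact ⟨i, (by simp only [Finset.mem_filter, Finset.mem_univ, true_and]; exact hb), hi1⟩
      · rcases lt_or_eq_of_le hj.1 with hqj | hqj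
        · obtain ⟨i, hi1, hi2⟩ := hcross (j-1) (by omega) (by omega)
          obtain ⟨-, hb, -⟩ := hupP i (by omega)
          exact ⟨i+1, (by simp only [Finset.mem_filter, Finset.mem_univ, true_and]; exact hb),
            (by show pos (c (i+1)) = j; omega)⟩
        · -- q = j = p : all vertices at the same position; use the minimal vertex
          obtain ⟨i0, -, hi0⟩ := Finset.exists_min_image Finset.univ c ⟨0, Finset.mem_univ 0⟩
          have hi0' : ∀ i, c i0 ≤ c i := fun i => hi0 i (Finset.mem_univ i)
          have hne : c i0 ≠ c (i0 + 1) := by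
            intro heq
            have h2 := hinj heq
            have h4 : (0 : Fin (m+1+1)) = 1 := by
              simpa using congrArg (fun t => t - i0) h2
            exact hone h4.symm
          have hlt : c i0 < c (i0+1) := lt_of_le_of_ne (hi0' (i0+1)) hne
          have hPeq : ∀ i, pos (c i) = j := by
            intro i
            have := hip' i
            have := hiq' i
            omega
          have hmem : ∀ i : Fin (m+1+1), c i = bb (pos (c i)) →
              ∃ a, ∃ (_ : a ∈ Finset.univ.filter
                (fun i : Fin (m+1+1) => c i = bb (pos (c i)))), pos (c a) = j := by
            intro i hbi
            exact ⟨i, (by simp only [Finset.mem_filter, Finset.mem_univ, true_and]; exact hbi),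
              hPeq i⟩
          rcases (hR _ _).1 (harc i0) with hlt' | ⟨-, -, hcase⟩
          · exact absurd hlt' (not_lt.2 hlt.le)
          · rcases hcase with ⟨h1, -, -⟩ | ⟨-, h1 | h1⟩
            · exact hmem i0 h1
            · exact hmem i0 h1
            · exact hmem (i0+1) h1
  -- now compute the sum
  have flip1 : ∀ i : Fin (m+1+1), (if c i = bb (pos (c i)) then (0:ZMod 2) else 1)
      = 1 + (if c i = bb (pos (c i)) then (1:ZMod 2) else 0) := by
    intro i
    by_cases hA : c i = bb (pos (c i))
    · rw [if_pos hA, if_pos hA]; decide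
    · rw [if_neg hA, if_neg hA]; decide
  have flip2 : ∀ i : Fin (m+1+1), (if pos (c i) < pos (c (i+1)) then (0:ZMod 2) else 1)
      = 1 + (if pos (c i) < pos (c (i+1)) then (1:ZMod 2) else 0) := by
    intro i
    by_cases hA : pos (c i) < pos (c (i+1))
    · rw [if_pos hA, if_pos hA]; decide
    · rw [if_neg hA, if_neg hA]; decide
  have hzero : (∑ i : Fin (m+1+1), ((pos (c i) : ZMod 2) + (pos (c (i+1)) : ZMod 2))) = 0 := by
    rw [Finset.sum_add_distrib]
    have he := Fintype.sum_equiv (Equiv.addRight (1 : Fin (m+1+1)))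
      (fun i => (pos (c (i+1)) : ZMod 2)) (fun i => (pos (c i) : ZMod 2)) (fun x => rfl)
    rw [show (∑ i : Fin (m+1+1), (pos (c (i+1)) : ZMod 2))
        = ∑ i : Fin (m+1+1), (pos (c i) : ZMod 2) from he]
    exact CharTwo.add_self_eq_zero _
  have hsum2 : (∑ i : Fin (m+1+1), (if c i = bb (pos (c i)) then (0:ZMod 2) else 1))
      = ((m+1+1 : ℕ) : ZMod 2) + (((Finset.univ.filter
          (fun i : Fin (m+1+1) => c i = bb (pos (c i)))).card : ℕ) : ZMod 2) := by
    rw [Finset.sum_congr rfl (fun i _ => flip1 i), Finset.sum_add_distrib, Finset.sum_boole]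
    congr 1
    simp
  have hsum3 : (∑ i : Fin (m+1+1), (if pos (c i) < pos (c (i+1)) then (0:ZMod 2) else 1))
      = ((m+1+1 : ℕ) : ZMod 2) + (((Finset.univ.filter
          (fun i : Fin (m+1+1) => pos (c i) < pos (c (i+1)))).card : ℕ) : ZMod 2) := by
    rw [Finset.sum_congr rfl (fun i _ => flip2 i), Finset.sum_add_distrib, Finset.sum_boole]
    congr 1
    simp
  show (∑ i : Fin (m+1+1), ((pos (c i) : ZMod 2) + (pos (c (i+1)) : ZMod 2) +
      (if c i = bb (pos (c i)) then 0 else 1) +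
      (if pos (c i) < pos (c (i+1)) then 0 else 1))) = 1
  rw [Finset.sum_add_distrib, Finset.sum_add_distrib, hzero, zero_add, hsum2, hsum3,
    cardU, cardK]
  rw [show p + 1 - q = (p - q) + 1 by omega]
  have h2 : (2 : ZMod 2) = 0 := rfl
  push_cast
  linear_combination ((m : ZMod 2) + 2 + ((p - q : ℕ) : ZMod 2)) * h2
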